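/- arXiv:2010.00304 — 3 statements merged into one kernel-verified Lean document; each statement's English description precedes it below -/
import Mathlib

section
/- Let Σ_k^{I,c} for k = 1..K, c = 1..C be symmetric positive definite n×n real matrices, and define Σ_k^L = ( (1/C) ∑_{c=1}^C (diag(σ(Σ_k^{I,c})))^{-1} )^{-1}, where diag(σ(M)) is the diagonal matrix of eigenvalues of M. If for every c, ∑_{k=1}^K tr(Σ_k^{I,c}) ≤ ∑_{k=1}^K tr(Σ_k^{0,c}) for given symmetric positive definite matrices Σ_k^{0,c}, then ∑_{k=1}^K tr((Σ_k^L)^{-1}) ≥ (n²K²/C) ∑_{c=1}^C ( ∑_{k=1}^K tr(Σ_k^{0,c}) )^{-1}. -/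
open scoped Matrix

lemma trace_eq_sum_eigenvalues {m : ℕ} {A : Matrix (Fin m) (Fin m) ℝ}
    (hA : A.IsHermitian) : A.trace = ∑ i, hA.eigenvalues i := by
  conv_lhs => rw [hA.spectral_theorem, Unitary.conjStarAlgAut_apply]
  rw [Matrix.trace_mul_cycle]
  have : (star (hA.eigenvectorUnitary : Matrix (Fin m) (Fin m) ℝ)) *
      (hA.eigenvectorUnitary : Matrix (Fin m) (Fin m) ℝ) = 1 := by
    exact_mod_cast Unitary.coe_star_mul_self hA.eigenvectorUnitary
  rw [this, one_mul, Matrix.trace_diagonal]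
  simp

theorem covariance_trace_bound (K C n : ℕ) (hK : 0 < K) (hC : 0 < C) (hn : 0 < n)
    (SI S0 : Fin K → Fin C → Matrix (Fin n) (Fin n) ℝ)
    (hSI : ∀ k c, (SI k c).PosDef) (hS0 : ∀ k c, (S0 k c).PosDef)
    (SL : Fin K → Matrix (Fin n) (Fin n) ℝ)
    (hSL : ∀ k, SL k =
      ((1 / (C : ℝ)) • ∑ c, (Matrix.diagonal ((hSI k c).1.eigenvalues))⁻¹)⁻¹)
    (htr : ∀ c, ∑ k, (SI k c).trace ≤ ∑ k, (S0 k c).trace) :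
    ∑ k, ((SL k)⁻¹).trace ≥
      ((n : ℝ) ^ 2 * (K : ℝ) ^ 2 / (C : ℝ)) * ∑ c, (∑ k, (S0 k c).trace)⁻¹ := by
  set v : Fin K → Fin C → Fin n → ℝ := fun k c => (hSI k c).1.eigenvalues with hv
  have hvpos : ∀ k c i, 0 < v k c i := fun k c i => (hSI k c).eigenvalues_pos i
  -- compute (SL k)⁻¹
  have hinv : ∀ k, (SL k)⁻¹ =
      Matrix.diagonal (fun i => (1 / (C : ℝ)) * ∑ c, (v k c i)⁻¹) := by
    intro k
    have hdinv : ∀ c : Fin C, (Matrix.diagonal (v k c))⁻¹ =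
        Matrix.diagonal (fun i => (v k c i)⁻¹) := by
      intro c
      apply Matrix.inv_eq_right_inv
      rw [Matrix.diagonal_mul_diagonal]
      have : (fun i => v k c i * (v k c i)⁻¹) = fun _ => (1 : ℝ) :=
        funext fun i => mul_inv_cancel₀ (hvpos k c i).ne'
      show Matrix.diagonal (fun i => v k c i * (v k c i)⁻¹) = 1
      rw [this, Matrix.diagonal_one]
    have hdiag : (1 / (C : ℝ)) • ∑ c, (Matrix.diagonal (v k c))⁻¹ =
        Matrix.diagonal (fun i => (1 / (C : ℝ)) * ∑ c, (v k c i)⁻¹) := by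
      simp_rw [hdinv]
      ext i j
      rcases eq_or_ne i j with rfl | h
      · simp [Matrix.sum_apply]
      · simp [Matrix.sum_apply, Matrix.diagonal_apply_ne _ h]
    rw [hSL k, hdiag, Matrix.nonsing_inv_nonsing_inv]
    rw [Matrix.det_diagonal, isUnit_iff_ne_zero, Finset.prod_ne_zero_iff]
    intro i _
    have : 0 < (1 / (C : ℝ)) * ∑ c, (v k c i)⁻¹ := by
      apply mul_pos (by positivity)
      apply Finset.sum_pos (fun c _ => inv_pos.mpr (hvpos k c i))
      exact Finset.univ_nonempty_iff.mpr ⟨⟨0, hC⟩⟩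
    exact this.ne'
  -- LHS equals (1/C) ∑ c ∑ k ∑ i (v k c i)⁻¹
  have hLHS : ∑ k, ((SL k)⁻¹).trace =
      (1 / (C : ℝ)) * ∑ c, ∑ k, ∑ i, (v k c i)⁻¹ := by
    simp_rw [hinv, Matrix.trace_diagonal, ← Finset.mul_sum]
    congr 1
    have hswap : ∀ k : Fin K, ∑ i, ∑ c, (v k c i)⁻¹ = ∑ c, ∑ i, (v k c i)⁻¹ :=
      fun k => Finset.sum_comm
    simp_rw [hswap]
    exact Finset.sum_comm
  rw [hLHS, ge_iff_le, div_mul_eq_mul_div, div_eq_mul_inv, mul_comm _ ((C : ℝ))⁻¹,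
    ← one_div]
  apply mul_le_mul_of_nonneg_left _ (by positivity)
  rw [Finset.mul_sum]
  apply Finset.sum_le_sum
  intro c _
  have hS0pos : 0 < ∑ k, (S0 k c).trace := by
    apply Finset.sum_pos
    · intro k _
      rw [trace_eq_sum_eigenvalues (hS0 k c).1]
      apply Finset.sum_pos (fun i _ => (hS0 k c).eigenvalues_pos i)
      exact Finset.univ_nonempty_iff.mpr ⟨⟨0, hn⟩⟩
    · exact Finset.univ_nonempty_iff.mpr ⟨⟨0, hK⟩⟩
  have hSIsum : ∑ k, ∑ i, v k c i ≤ ∑ k, (S0 k c).trace := by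
    refine le_trans (le_of_eq ?_) (htr c)
    exact Finset.sum_congr rfl fun k _ => (trace_eq_sum_eigenvalues (hSI k c).1).symm
  have hinvnn : 0 ≤ ∑ k, ∑ i, (v k c i)⁻¹ :=
    Finset.sum_nonneg fun k _ => Finset.sum_nonneg fun i _ => (inv_pos.mpr (hvpos k c i)).le
  -- Cauchy-Schwarz (AM-HM) over the product index set
  have hCS : ((n : ℝ) * K) ^ 2 ≤ (∑ k, ∑ i, v k c i) * ∑ k, ∑ i, (v k c i)⁻¹ := by
    have h := Finset.sum_sq_le_sum_mul_sum_of_sq_eq_mul (Finset.univ : Finset (Fin K × Fin n))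
      (r := fun _ => (1 : ℝ)) (f := fun p => v p.1 c p.2) (g := fun p => (v p.1 c p.2)⁻¹)
      (fun p _ => (hvpos p.1 c p.2).le) (fun p _ => (inv_pos.mpr (hvpos p.1 c p.2)).le)
      (fun p _ => by rw [one_pow, mul_inv_cancel₀ (hvpos p.1 c p.2).ne'])
    have e1 : ∑ _p : Fin K × Fin n, (1 : ℝ) = (n : ℝ) * K := by
      simp [Finset.card_univ, mul_comm]
    have e2 : ∑ p : Fin K × Fin n, v p.1 c p.2 = ∑ k, ∑ i, v k c i := by
      rw [← Finset.univ_product_univ, Finset.sum_product]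
    have e3 : ∑ p : Fin K × Fin n, (v p.1 c p.2)⁻¹ = ∑ k, ∑ i, (v k c i)⁻¹ := by
      rw [← Finset.univ_product_univ, Finset.sum_product]
    rwa [e1, e2, e3] at h
  have h2 : ((n : ℝ) * K) ^ 2 ≤ (∑ k, (S0 k c).trace) * ∑ k, ∑ i, (v k c i)⁻¹ :=
    hCS.trans (mul_le_mul_of_nonneg_right hSIsum hinvnn)
  rw [show (n : ℝ) ^ 2 * (K : ℝ) ^ 2 = ((n : ℝ) * K) ^ 2 by ring, ← div_eq_mul_inv,
    div_le_iff₀ hS0pos]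
  linarith [h2]
end

section
/- Suppose that for each c = 1,...,C the initial covariances satisfy ∑_{k=1}^K tr(Σ_k^{0,c}) ≤ B for some bound B > 0. Then under the hypotheses of Theorem 1, ∑_{k=1}^K tr((Σ_k^L)^{-1}) ≥ n²K²/B. -/
open scoped Matrix

/-- trace of a real hermitian matrix equals sum of eigenvalues. -/
lemma trace_eq_sum_eigs {n : ℕ} {A : Matrix (Fin n) (Fin n) ℝ} (hA : A.IsHermitian) :
    A.trace = ∑ i, hA.eigenvalues i := by
  conv_lhs => rw [hA.spectral_theorem]
  rw [Unitary.conjStarAlgAut_apply, Matrix.trace_mul_cycle]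
  have h1 : (star (hA.eigenvectorUnitary : Matrix (Fin n) (Fin n) ℝ)) *
      (hA.eigenvectorUnitary : Matrix (Fin n) (Fin n) ℝ) = 1 :=
    (Matrix.mem_unitaryGroup_iff').mp (hA.eigenvectorUnitary).2
  rw [h1, Matrix.one_mul, Matrix.trace_diagonal]
  simp

/-- Cauchy–Schwarz / AM–HM: for positive `f`, `card² ≤ (∑ f) * (∑ f⁻¹)`. -/
lemma card_sq_le_sum_mul_sum_inv {ι : Type*} (s : Finset ι) (f : ι → ℝ)
    (hf : ∀ i ∈ s, 0 < f i) :
    (s.card : ℝ) ^ 2 ≤ (∑ i ∈ s, f i) * ∑ i ∈ s, (f i)⁻¹ := by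
  have := Finset.sum_sq_le_sum_mul_sum_of_sq_eq_mul s
    (f := f) (g := fun i => (f i)⁻¹) (r := fun _ => (1 : ℝ))
    (fun i hi => (hf i hi).le) (fun i hi => (inv_nonneg).mpr (hf i hi).le)
    (fun i hi => by rw [mul_inv_cancel₀ (hf i hi).ne']; norm_num)
  simpa using this

theorem covariance_trace_bound_uniform (K C n : ℕ) (hK : 0 < K) (hC : 0 < C) (hn : 0 < n)
    (SI S0 : Fin K → Fin C → Matrix (Fin n) (Fin n) ℝ)
    (hSI : ∀ k c, (SI k c).PosDef) (hS0 : ∀ k c, (S0 k c).PosDef)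
    (SL : Fin K → Matrix (Fin n) (Fin n) ℝ)
    (hSL : ∀ k, SL k =
      ((1 / (C : ℝ)) • ∑ c, (Matrix.diagonal ((hSI k c).1.eigenvalues))⁻¹)⁻¹)
    (htr : ∀ c, ∑ k, (SI k c).trace ≤ ∑ k, (S0 k c).trace)
    (B : ℝ) (hB : 0 < B) (hbound : ∀ c, ∑ k, (S0 k c).trace ≤ B) :
    ∑ k, ((SL k)⁻¹).trace ≥ (n : ℝ) ^ 2 * (K : ℝ) ^ 2 / B := by
  classical
  haveI : NeZero K := ⟨hK.ne'⟩
  haveI : NeZero C := ⟨hC.ne'⟩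
  haveI : NeZero n := ⟨hn.ne'⟩
  set v : Fin K → Fin C → Fin n → ℝ := fun k c => (hSI k c).1.eigenvalues with hv
  have hvpos : ∀ k c i, 0 < v k c i := fun k c i => (hSI k c).eigenvalues_pos i
  -- the inner diagonal inverses
  have hinvd : ∀ k c, (Matrix.diagonal (v k c))⁻¹ =
      Matrix.diagonal (fun i => (v k c i)⁻¹) := by
    intro k c
    apply Matrix.inv_eq_right_inv
    rw [Matrix.diagonal_mul_diagonal]
    convert Matrix.diagonal_one with i
    exact mul_inv_cancel₀ (hvpos k c i).ne'
  -- compute the inverse of SL k as a diagonal matrix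
  have hdiag : ∀ k, (SL k)⁻¹ =
      Matrix.diagonal (fun i => (1 / (C : ℝ)) * ∑ c, (v k c i)⁻¹) := by
    intro k
    have hsum : ((1 / (C : ℝ)) • ∑ c, (Matrix.diagonal (v k c))⁻¹ :
        Matrix (Fin n) (Fin n) ℝ) =
        Matrix.diagonal (fun i => (1 / (C : ℝ)) * ∑ c, (v k c i)⁻¹) := by
      simp_rw [hinvd]
      ext i j
      by_cases h : i = j
      · subst h
        simp [Matrix.sum_apply, Finset.mul_sum]
      · simp [Matrix.sum_apply, Matrix.diagonal_apply_ne _ h]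
    rw [hSL k, hsum]
    have hdet : IsUnit (Matrix.diagonal
        (fun i => (1 / (C : ℝ)) * ∑ c, (v k c i)⁻¹)).det := by
      rw [Matrix.det_diagonal]
      refine (Finset.prod_ne_zero_iff.mpr fun i _ => ?_).isUnit
      have hpos : 0 < (1 / (C : ℝ)) * ∑ c, (v k c i)⁻¹ := by
        apply mul_pos
        · positivity
        · exact Finset.sum_pos (fun c _ => inv_pos.mpr (hvpos k c i)) Finset.univ_nonempty
      exact hpos.ne'
    exact Matrix.nonsing_inv_nonsing_inv _ hdet
  -- trace formula
  have htrace : ∑ k, ((SL k)⁻¹).trace =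
      (1 / (C : ℝ)) * ∑ c, ∑ k, ∑ i, (v k c i)⁻¹ := by
    simp_rw [hdiag, Matrix.trace_diagonal, ← Finset.mul_sum]
    congr 1
    have h1 : ∀ k : Fin K, ∑ i, ∑ c, (v k c i)⁻¹ = ∑ c, ∑ i, (v k c i)⁻¹ :=
      fun k => Finset.sum_comm
    simp_rw [h1]
    exact Finset.sum_comm
  -- per-condition bound
  have hper : ∀ c : Fin C, (n : ℝ) ^ 2 * (K : ℝ) ^ 2 / B ≤ ∑ k, ∑ i, (v k c i)⁻¹ := by
    intro c
    set T : ℝ := ∑ k, ∑ i, v k c i with hT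
    have hTpos : 0 < T :=
      Finset.sum_pos (fun k _ => Finset.sum_pos (fun i _ => hvpos k c i)
        Finset.univ_nonempty) Finset.univ_nonempty
    have hTB : T ≤ B := by
      have h1 : T = ∑ k, (SI k c).trace := by
        rw [hT]
        congr 1; funext k
        exact (trace_eq_sum_eigs (hSI k c).1).symm
      rw [h1]
      exact le_trans (htr c) (hbound c)
    have hCS : ((K : ℝ) * (n : ℝ)) ^ 2 ≤ T * ∑ k, ∑ i, (v k c i)⁻¹ := by
      have := card_sq_le_sum_mul_sum_inv
        ((Finset.univ : Finset (Fin K)) ×ˢ (Finset.univ : Finset (Fin n)))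
        (fun p => v p.1 c p.2) (fun p _ => hvpos p.1 c p.2)
      rw [Finset.card_product, Finset.card_univ, Finset.card_univ, Fintype.card_fin,
        Fintype.card_fin, Finset.sum_product, Finset.sum_product] at this
      push_cast at this
      exact this
    have h2 : (n : ℝ) ^ 2 * (K : ℝ) ^ 2 / B ≤ (n : ℝ) ^ 2 * (K : ℝ) ^ 2 / T := by
      gcongr
    refine le_trans h2 ?_
    rw [div_le_iff₀ hTpos]
    calc (n : ℝ) ^ 2 * (K : ℝ) ^ 2 = ((K : ℝ) * (n : ℝ)) ^ 2 := by ring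
      _ ≤ T * ∑ k, ∑ i, (v k c i)⁻¹ := hCS
      _ = (∑ k, ∑ i, (v k c i)⁻¹) * T := mul_comm _ _
  -- combine
  rw [ge_iff_le, htrace]
  have hsumc : (C : ℝ) * ((n : ℝ) ^ 2 * (K : ℝ) ^ 2 / B) ≤ ∑ c, ∑ k, ∑ i, (v k c i)⁻¹ := by
    calc (C : ℝ) * ((n : ℝ) ^ 2 * (K : ℝ) ^ 2 / B)
        = ∑ _c : Fin C, (n : ℝ) ^ 2 * (K : ℝ) ^ 2 / B := by
          rw [Finset.sum_const, Finset.card_univ, Fintype.card_fin, nsmul_eq_mul]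
      _ ≤ ∑ c, ∑ k, ∑ i, (v k c i)⁻¹ := Finset.sum_le_sum fun c _ => hper c
  have hCpos : (0 : ℝ) < (C : ℝ) := by exact_mod_cast hC
  calc (n : ℝ) ^ 2 * (K : ℝ) ^ 2 / B
      = (1 / (C : ℝ)) * ((C : ℝ) * ((n : ℝ) ^ 2 * (K : ℝ) ^ 2 / B)) := by
        field_simp
    _ ≤ (1 / (C : ℝ)) * ∑ c, ∑ k, ∑ i, (v k c i)⁻¹ := by
        apply mul_le_mul_of_nonneg_left hsumc
        positivity
end

section
/- If σ^{i+1} = I_Σ σ^i with 0 ≤ I_Σ ≤ I symmetric, and Σ^i is the symmetric positive semidefinite matrix with vec((Σ^i)^{1/2}) = σ^i and Σ^i = ((Σ^i)^{1/2})ᵀ (Σ^i)^{1/2}, then tr(Σ^{i+1}) ≤ tr(Σ^i) for all i, i.e., the total variance is nonincreasing along EM covariance updates. -/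
open scoped Matrix

theorem trace_nonincreasing_em (n : ℕ)
    (IS : Matrix (Fin n × Fin n) (Fin n × Fin n) ℝ)
    (hsymm : IS.IsSymm) (hpos : IS.PosSemidef) (hle : (1 - IS).PosSemidef)
    (R : ℕ → Matrix (Fin n) (Fin n) ℝ)
    (S : ℕ → Matrix (Fin n) (Fin n) ℝ)
    (hS : ∀ i, S i = (R i)ᵀ * R i)
    (hupd : ∀ i, (fun p : Fin n × Fin n => R (i + 1) p.1 p.2) =
      IS.mulVec (fun p : Fin n × Fin n => R i p.1 p.2)) :
    ∀ i, (S (i + 1)).trace ≤ (S i).trace := by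
  -- key: 1 - IS*IS is PSD
  have hIS2 : (1 - IS * IS).PosSemidef := by
    have h1 : (IS * (1 - IS) * ISᴴ).PosSemidef := hle.mul_mul_conjTranspose_same IS
    have h2 : ((1 - IS) * IS * (1 - IS)ᴴ).PosSemidef := hpos.mul_mul_conjTranspose_same (1 - IS)
    have hH : ISᴴ = IS := by
      rw [Matrix.conjTranspose_eq_transpose_of_trivial]; exact hsymm
    have key : 1 - IS * IS = (1 - IS) + (IS * (1 - IS) * ISᴴ + (1 - IS) * IS * (1 - IS)ᴴ) := by
      have hH' : (1 - IS)ᴴ = 1 - IS := by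
        simp [Matrix.conjTranspose_sub, hH, hsymm.eq]
      rw [hH, hH']
      noncomm_ring
    rw [key]
    exact hle.add (h1.add h2)
  intro i
  set v : Fin n × Fin n → ℝ := fun p => R i p.1 p.2 with hv
  have htr : ∀ j : ℕ, (S j).trace = (fun p : Fin n × Fin n => R j p.1 p.2) ⬝ᵥ
      (fun p : Fin n × Fin n => R j p.1 p.2) := by
    intro j
    rw [hS j]
    simp only [Matrix.trace, Matrix.diag, Matrix.mul_apply, Matrix.transpose_apply,
      dotProduct, Fintype.sum_prod_type]
    exact Finset.sum_comm
  have h0 : 0 ≤ v ⬝ᵥ (1 - IS * IS).mulVec v := by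
    have := hIS2.dotProduct_mulVec_nonneg v
    simpa using this
  have hexp : v ⬝ᵥ (1 - IS * IS).mulVec v = v ⬝ᵥ v - v ⬝ᵥ (IS * IS).mulVec v := by
    simp [Matrix.sub_mulVec, dotProduct_sub]
  have h1 : (S (i+1)).trace = v ⬝ᵥ (IS * IS).mulVec v := by
    rw [htr (i+1), hupd i, ← hv]
    rw [← Matrix.mulVec_mulVec, Matrix.dotProduct_mulVec (IS.mulVec v),
      ← Matrix.mulVec_transpose, hsymm.eq, dotProduct_comm]
  have h2 : (S i).trace = v ⬝ᵥ v := htr i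
  rw [h1, h2]
  linarith [h0, hexp]
end
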